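/- The vectors {y_α : α ∈ ℂ}, where y_α = (gα(1-α), α[h - cd(α+ᾱ) + k|α|²], -(e + f|α|²), -ᾱ(c + dα))ᵀ, span all of ℂ⁴. -/

import Mathlib

set_option maxHeartbeats 1000000 in
/-- The vectors `y_α`, `α ∈ ℂ`, span all of `ℂ⁴`. -/
theorem y_alpha_span_top (a b c d e f g h k : ℝ)
    (ha : 0 < a) (hb : 0 < b) (hc : 0 < c) (hd : 0 < d) (hab : 1 < a * b)
    (hg : g = Real.sqrt (a * c * d))
    (he : e = a * (c + d) * c / (a * b - 1))
    (hf : f = a * (c + d) * d / (a * b - 1))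
    (hh : h = b * e - c ^ 2) (hk : k = b * f - d ^ 2) :
    Submodule.span ℂ
      (Set.range (fun α : ℂ =>
        (![(g : ℂ) * α * (1 - α),
           α * ((h : ℂ) - (c : ℂ) * (d : ℂ) * (α + starRingEnd ℂ α) +
             (k : ℂ) * ((‖α‖ : ℝ) : ℂ) ^ 2),
           -((e : ℂ) + (f : ℂ) * ((‖α‖ : ℝ) : ℂ) ^ 2),
           -(starRingEnd ℂ α) * ((c : ℂ) + (d : ℂ) * α)] : Fin 4 → ℂ))) = ⊤ := by
  have hab1 : (0:ℝ) < a * b - 1 := by linarith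
  have hepos : 0 < e := by
    rw [he]; exact div_pos (by positivity) hab1
  have hgpos : 0 < g := by
    rw [hg]; exact Real.sqrt_pos.2 (by positivity)
  have hTpos : 0 < h + k - c * d := by
    rw [hh, hk, he, hf]
    have key : b * (a * (c + d) * c / (a * b - 1)) - c ^ 2 +
        (b * (a * (c + d) * d / (a * b - 1)) - d ^ 2) - c * d
        = (a*b*(c+d)^2 - (c^2 + c*d + d^2)*(a*b-1)) / (a*b-1) := by
      field_simp [show b * a - 1 ≠ 0 by rw [mul_comm]; exact hab1.ne']; ring
    rw [key]
    refine div_pos ?_ hab1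
    nlinarith [mul_pos (mul_pos (mul_pos ha hb) hc) hd, mul_pos hc hd,
      pow_pos hc 2, pow_pos hd 2]
  have hec : (e : ℂ) ≠ 0 := Complex.ofReal_ne_zero.2 hepos.ne'
  have hgc : (g : ℂ) ≠ 0 := Complex.ofReal_ne_zero.2 hgpos.ne'
  have hcd : (c : ℂ) + d ≠ 0 := by
    have : ((c + d : ℝ) : ℂ) ≠ 0 := Complex.ofReal_ne_zero.2 (by positivity)
    simpa using this
  have hTc : (h : ℂ) + k - c * d ≠ 0 := by
    have : ((h + k - c * d : ℝ) : ℂ) ≠ 0 := Complex.ofReal_ne_zero.2 hTpos.ne'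
    simpa using this
  set F : ℂ → Fin 4 → ℂ := fun α : ℂ =>
    (![(g : ℂ) * α * (1 - α),
       α * ((h : ℂ) - (c : ℂ) * (d : ℂ) * (α + starRingEnd ℂ α) +
         (k : ℂ) * ((‖α‖ : ℝ) : ℂ) ^ 2),
       -((e : ℂ) + (f : ℂ) * ((‖α‖ : ℝ) : ℂ) ^ 2),
       -(starRingEnd ℂ α) * ((c : ℂ) + (d : ℂ) * α)] : Fin 4 → ℂ) with hF
  set S := Submodule.span ℂ (Set.range F) with hS
  have mem : ∀ α : ℂ, F α ∈ S := fun α => Submodule.subset_span ⟨α, rfl⟩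
  have m2 : (![0, 0, 1, 0] : Fin 4 → ℂ) ∈ S := by
    have hEq : (![0, 0, 1, 0] : Fin 4 → ℂ) = (-(e:ℂ)⁻¹) • F 0 := by
      funext j
      fin_cases j <;> simp [hF] <;> (try field_simp)
    rw [hEq]; exact S.smul_mem _ (mem 0)
  have m1 : (![0, 1, 0, 0] : Fin 4 → ℂ) ∈ S := by
    have hEq : (![0, 1, 0, 0] : Fin 4 → ℂ)
        = (4 * ((h:ℂ) + k - c * d))⁻¹ •
          ((2:ℂ) • F 1 + (-(1 + Complex.I)) • F Complex.I +
            (-(1 - Complex.I)) • F (-Complex.I)) := by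
      funext j
      fin_cases j <;>
        simp [hF, Complex.norm_I, Complex.conj_I, map_neg] <;>
        (try field_simp) <;> (try ring_nf) <;> (try simp [Complex.I_sq]) <;>
        (try ring) <;> (try tauto)
    rw [hEq]
    exact S.smul_mem _ (S.add_mem (S.add_mem (S.smul_mem _ (mem 1))
      (S.smul_mem _ (mem Complex.I))) (S.smul_mem _ (mem (-Complex.I))))
  have m3 : (![0, 0, 0, 1] : Fin 4 → ℂ) ∈ S := by
    have hEq : (![0, 0, 0, 1] : Fin 4 → ℂ)
        = ((c:ℂ) + d)⁻¹ • (((h:ℂ) - 2 * c * d + k) • (![0, 1, 0, 0] : Fin 4 → ℂ)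
            + (-1 : ℂ) • F 1 + (((e:ℂ) + f) / e) • F 0) := by
      funext j
      fin_cases j <;> simp [hF] <;> (try field_simp) <;> (try ring) <;> (try tauto)
    rw [hEq]
    exact S.smul_mem _ (S.add_mem (S.add_mem (S.smul_mem _ m1)
      (S.smul_mem _ (mem 1))) (S.smul_mem _ (mem 0)))
  have m0 : (![1, 0, 0, 0] : Fin 4 → ℂ) ∈ S := by
    have hEq : (![1, 0, 0, 0] : Fin 4 → ℂ)
        = (2 * (g:ℂ))⁻¹ • (F Complex.I + F (-Complex.I)
            + (-(2 * ((e:ℂ) + f)) / e) • F 0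
            + (2 * (d:ℂ)) • (![0, 0, 0, 1] : Fin 4 → ℂ)) := by
      funext j
      fin_cases j <;>
        simp [hF, Complex.norm_I, Complex.conj_I, map_neg] <;>
        (try field_simp) <;> (try ring_nf) <;> (try simp [Complex.I_sq]) <;>
        (try ring) <;> (try tauto)
    rw [hEq]
    exact S.smul_mem _ (S.add_mem (S.add_mem (S.add_mem (mem Complex.I)
      (mem (-Complex.I))) (S.smul_mem _ (mem 0))) (S.smul_mem _ m3))
  rw [eq_top_iff]
  intro x _
  have hx : x = x 0 • (![1, 0, 0, 0] : Fin 4 → ℂ) + x 1 • ![0, 1, 0, 0]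
      + x 2 • ![0, 0, 1, 0] + x 3 • ![0, 0, 0, 1] := by
    funext j
    fin_cases j <;> (try simp)
  rw [hx]
  exact S.add_mem (S.add_mem (S.add_mem (S.smul_mem _ m0) (S.smul_mem _ m1))
    (S.smul_mem _ m2)) (S.smul_mem _ m3)
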